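/- With the maps of the context, let λ ∈ ℂ be arbitrary and suppose 2p = n′π for some integer n′. Then the finitely supported vector φ_{b0} := (e₁ − e₂ − e₄ + e₅)·δ₀ satisfies A_p φ_{b0} = (−1)^{n′}·φ_{b0}; i.e. φ_{b0} is a perfectly localized bound state of the interacting two-particle evolution at the critical values of the total momentum 2p ∈ πℤ. -/

import Mathlib

noncomputable section
open Matrix
open scoped Classical

/-- The 6×6 block-diagonal matrix `M = diag(O′, O′)`, where `O′` is the 3×3 matrix with rows
`(0, 0, −conj λ)`, `(0, 0, −conj λ)`, `(−λ, −λ, 0)`. -/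
def Mblk (l : ℂ) : Matrix (Fin 6) (Fin 6) ℂ :=
  !![0, 0, -(starRingEnd ℂ) l, 0, 0, 0;
     0, 0, -(starRingEnd ℂ) l, 0, 0, 0;
     -l, -l, 0, 0, 0, 0;
     0, 0, 0, 0, 0, -(starRingEnd ℂ) l;
     0, 0, 0, 0, 0, -(starRingEnd ℂ) l;
     0, 0, 0, -l, -l, 0]

/-- The one-step interaction unitary `E = exp(−i·M)`. -/
def Emat (l : ℂ) : Matrix (Fin 6) (Fin 6) ℂ := NormedSpace.exp ((-Complex.I) • Mblk l)

/-- The swap `S`: `(S x)(y) = (x(−y)₄, x(−y)₅, x(−y)₆, x(−y)₁, x(−y)₂, x(−y)₃)`. -/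
def Sop (x : ℤ → Fin 6 → ℂ) : ℤ → Fin 6 → ℂ := fun y i => x (-y) (![3, 4, 5, 0, 1, 2] i)

/-- The antisymmetrizer `P₋ = (1/2)(id − S)`. -/
def Pneg (x : ℤ → Fin 6 → ℂ) : ℤ → Fin 6 → ℂ := fun y i => (1 / 2) * (x y i - Sop x y i)

/-- The free evolution `D_p` at total momentum `p`:
`(D_p x)(y) = (e^{2ip} x(y)₁, e^{−2ip} x(y)₂, x(y+2)₃, e^{2ip} x(y)₄, e^{−2ip} x(y)₅, x(y−2)₆)`. -/
def Dop (p : ℝ) (x : ℤ → Fin 6 → ℂ) : ℤ → Fin 6 → ℂ := fun y =>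
  ![Complex.exp (2 * p * Complex.I) * x y 0,
    Complex.exp (-(2 * p) * Complex.I) * x y 1,
    x (y + 2) 2,
    Complex.exp (2 * p * Complex.I) * x y 3,
    Complex.exp (-(2 * p) * Complex.I) * x y 4,
    x (y - 2) 5]

/-- The interaction `J`: `(J x)(0) = E · x(0)` and `(J x)(y) = x(y)` for `y ≠ 0`. -/
def Jop (l : ℂ) (x : ℤ → Fin 6 → ℂ) : ℤ → Fin 6 → ℂ := fun y =>
  if y = 0 then (Emat l).mulVec (x 0) else x y


private lemma v6_2 (a b c d e f : ℂ) : ![a,b,c,d,e,f] 2 = c := rfl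
private lemma v6_3 (a b c d e f : ℂ) : ![a,b,c,d,e,f] 3 = d := rfl
private lemma v6_4 (a b c d e f : ℂ) : ![a,b,c,d,e,f] 4 = e := rfl
private lemma v6_5 (a b c d e f : ℂ) : ![a,b,c,d,e,f] 5 = f := rfl

private lemma exp_mulVec_fixed {n : ℕ} (A : Matrix (Fin n) (Fin n) ℂ) (v : Fin n → ℂ)
    (h : A.mulVec v = 0) : (NormedSpace.exp A).mulVec v = v := by
  letI : SeminormedRing (Matrix (Fin n) (Fin n) ℂ) := Matrix.linftyOpSemiNormedRing
  letI : NormedRing (Matrix (Fin n) (Fin n) ℂ) := Matrix.linftyOpNormedRing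
  letI : NormedAlgebra ℂ (Matrix (Fin n) (Fin n) ℂ) := Matrix.linftyOpNormedAlgebra
  let L : Matrix (Fin n) (Fin n) ℂ →L[ℂ] (Fin n → ℂ) :=
    LinearMap.toContinuousLinearMap
      { toFun := fun B => B.mulVec v
        map_add' := fun B C => Matrix.add_mulVec B C v
        map_smul' := fun c B => (Matrix.smul_mulVec c B v) }
  have hL : ∀ B, L B = B.mulVec v := fun B => rfl
  have hpow : ∀ k : ℕ, (A ^ (k+1)).mulVec v = 0 := by
    intro k
    rw [pow_succ, ← Matrix.mulVec_mulVec, h, Matrix.mulVec_zero]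
  have hsum : Summable (fun k : ℕ => ((Nat.factorial k : ℂ))⁻¹ • A ^ k) :=
    NormedSpace.expSeries_summable' A
  have key : (NormedSpace.exp A).mulVec v = L (NormedSpace.exp A) := rfl
  rw [key, NormedSpace.exp_eq_tsum ℂ, L.map_tsum hsum]
  have h2 : ∀ k : ℕ, L (((Nat.factorial k : ℂ))⁻¹ • A ^ k) = if k = 0 then v else 0 := by
    intro k
    rw [hL]
    cases k with
    | zero =>
        show (((Nat.factorial 0 : ℂ))⁻¹ • (A ^ 0)).mulVec v = if (0:ℕ) = 0 then v else 0
        simp [Matrix.smul_mulVec, Matrix.one_mulVec]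
    | succ k =>
        show (((Nat.factorial (k+1) : ℂ))⁻¹ • (A ^ (k+1))).mulVec v = if k + 1 = 0 then v else 0
        simp [Matrix.smul_mulVec, hpow k]
  simp_rw [h2]
  rw [tsum_eq_single 0 (by intro b hb; simp [hb])]
  simp

private lemma Emat_fixed (l : ℂ) :
    (Emat l).mulVec ![1, -1, 0, -1, 1, 0] = ![1, -1, 0, -1, 1, 0] := by
  apply exp_mulVec_fixed
  rw [Matrix.smul_mulVec]
  have : (Mblk l).mulVec ![1, -1, 0, -1, 1, 0] = 0 := by
    simp only [Mblk, Matrix.cons_mulVec, Matrix.cons_dotProduct, Matrix.empty_mulVec,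
      Matrix.dotProduct_of_isEmpty, Matrix.head_cons, Matrix.tail_cons]
    norm_num
    funext i
    exact i.elim0
  rw [this, smul_zero]

/-- The one-step two-particle evolution `A_p = P₋ ∘ J ∘ D_p ∘ P₋`. -/
def Aop (l : ℂ) (p : ℝ) : (ℤ → Fin 6 → ℂ) → (ℤ → Fin 6 → ℂ) :=
  Pneg ∘ Jop l ∘ Dop p ∘ Pneg

/-- For any coupling `λ` and total momentum `p` with `2p = n′π` for some integer `n′`, the
perfectly localized vector `φ_{b0} = (e₁ − e₂ − e₄ + e₅)·δ₀` is a bound state of the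
interacting two-particle evolution: `A_p φ_{b0} = (−1)^{n′} φ_{b0}`. -/
theorem Aop_bound_state_critical_momentum (l : ℂ) (p : ℝ) (n' : ℤ)
    (hp : 2 * p = n' * Real.pi) :
    let φb0 : ℤ → Fin 6 → ℂ := fun y => if y = 0 then ![1, -1, 0, -1, 1, 0] else 0
    Aop l p φb0 = fun y i => (-1 : ℂ) ^ n' * φb0 y i := by
  intro φb0
  set c : ℂ := (-1 : ℂ) ^ n' with hc
  have hcc : c * c = 1 := by
    rw [hc, ← zpow_add₀ (by norm_num : (-1:ℂ) ≠ 0)]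
    exact Even.neg_one_zpow ⟨n', rfl⟩
  have h1 : Complex.exp (2 * p * Complex.I) = c := by
    have : (2 * (p:ℂ)) = (n' : ℂ) * Real.pi := by
      have h : ((2 * p : ℝ) : ℂ) = ((n' * Real.pi : ℝ) : ℂ) := by rw [hp]
      push_cast at h
      exact h
    rw [show (2 * (p:ℂ) * Complex.I) = (n' : ℂ) * (Real.pi * Complex.I) by rw [this]; ring,
      Complex.exp_int_mul, Complex.exp_pi_mul_I, hc]
  have h2 : Complex.exp (-(2 * p) * Complex.I) = c := by
    have : (-(2 * (p:ℝ)) : ℂ) * Complex.I = -(2 * (p:ℝ) * Complex.I) := by ring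
    rw [this, Complex.exp_neg, h1]
    exact inv_eq_of_mul_eq_one_right hcc
  have hP : Pneg φb0 = φb0 := by
    funext y i
    by_cases hy : y = 0
    · subst hy
      simp only [Pneg, Sop, neg_zero, φb0, if_pos rfl]
      fin_cases i <;> norm_num [v6_2, v6_3, v6_4, v6_5]
    · have hy' : -y ≠ 0 := by simpa using hy
      simp [Pneg, Sop, φb0, if_neg hy, if_neg hy']
  have h3 : ∀ z : ℤ, φb0 z 2 = 0 := by
    intro z; by_cases hz : z = 0 <;> simp [φb0, hz]
  have h5 : ∀ z : ℤ, φb0 z 5 = 0 := by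
    intro z; by_cases hz : z = 0 <;> simp [φb0, hz, v6_5]
  have h2' : Complex.exp (-(2 * (p:ℂ) * Complex.I)) = c := by
    rw [← neg_mul]; exact h2
  have hD : Dop p φb0 = fun y i => c * φb0 y i := by
    funext y i
    fin_cases i <;>
      simp [Dop, h1, h2, h2', h3, h5, v6_3, v6_4, v6_5]
  have hJ : Jop l (fun y i => c * φb0 y i) = fun y i => c * φb0 y i := by
    funext y i
    by_cases hy : y = 0
    · subst hy
      simp only [Jop, if_pos rfl]
      have hx : (fun i => c * φb0 0 i) = c • (![1, -1, 0, -1, 1, 0] : Fin 6 → ℂ) := by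
        funext j; simp [φb0, Pi.smul_apply, smul_eq_mul]
      rw [hx, Matrix.mulVec_smul, Emat_fixed]
      simp [φb0]
    · simp [Jop, hy]
  have hP2 : Pneg (fun y i => c * φb0 y i) = fun y i => c * φb0 y i := by
    funext y i
    have h := congrFun (congrFun hP y) i
    simp only [Pneg, Sop] at h ⊢
    linear_combination c * h
  show Pneg (Jop l (Dop p (Pneg φb0))) = _
  rw [hP, hD, hJ, hP2]
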